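/- Let B₁ ≠ B₂ ∈ ℂ, let P₀, P₁, P₂ ∈ ℂ be non-collinear, and let P₃, P₄ ∈ ℂ be such that B₁, P₃, P₄ are non-collinear. If g is a direct isometry of the plane with |g(P k) − B₁| = |P k − B₁| for k = 0, 1, 2 and |g(P k) − B₂| = |P k − B₂| for k = 3, 4, then g = id. -/

import Mathlib

open Complex

/-- Points satisfying a nondegenerate real-linear equation `Re (u * z) = c` are collinear. -/
lemma line_collinear_aux (u : ℂ) (hu : u ≠ 0) (c : ℝ) (z1 z2 z3 : ℂ)
    (h1 : (u * z1).re = c) (h2 : (u * z2).re = c) (h3 : (u * z3).re = c) :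
    Collinear ℝ ({z1, z2, z3} : Set ℂ) := by
  rw [collinear_iff_of_mem (Set.mem_insert z1 _)]
  refine ⟨u⁻¹ * Complex.I, ?_⟩
  have key : ∀ z : ℂ, (u * z).re = c → ∃ r : ℝ, z = r • (u⁻¹ * Complex.I) +ᵥ z1 := by
    intro z hz
    refine ⟨(u * (z - z1)).im, ?_⟩
    set r := (u * (z - z1)).im with hr
    have hre : (u * (z - z1)).re = 0 := by
      have : u * (z - z1) = u * z - u * z1 := by ring
      rw [this, Complex.sub_re, hz, h1, sub_self]
    have hmain : u * (z - z1) = (r : ℂ) * Complex.I := by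
      conv_lhs => rw [← Complex.re_add_im (u * (z - z1))]
      rw [hre, ← hr]; simp
    have h2' : z - z1 = u⁻¹ * ((r : ℂ) * Complex.I) := by
      rw [← hmain, ← mul_assoc, inv_mul_cancel₀ hu, one_mul]
    simp only [vadd_eq_add, Complex.real_smul]
    rw [← sub_eq_iff_eq_add, h2']; ring
  intro p hp
  rcases hp with rfl | rfl | rfl
  · exact ⟨0, by simp⟩
  · exact key _ h2
  · exact key _ h3

theorem three_plus_two_constructible (B1 B2 : ℂ) (hB : B1 ≠ B2)
    (P0 P1 P2 : ℂ) (hnc1 : ¬ Collinear ℝ ({P0, P1, P2} : Set ℂ))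
    (P3 P4 : ℂ) (hnc2 : ¬ Collinear ℝ ({B1, P3, P4} : Set ℂ))
    (g : ℂ → ℂ) (hg : ∃ a b : ℂ, ‖a‖ = 1 ∧ g = fun z => a * z + b)
    (h0 : ‖g P0 - B1‖ = ‖P0 - B1‖)
    (h1 : ‖g P1 - B1‖ = ‖P1 - B1‖)
    (h2 : ‖g P2 - B1‖ = ‖P2 - B1‖)
    (h3 : ‖g P3 - B2‖ = ‖P3 - B2‖)
    (h4 : ‖g P4 - B2‖ = ‖P4 - B2‖) :
    g = id := by
  obtain ⟨a, b, ha, rfl⟩ := hg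
  simp only at h0 h1 h2 h3 h4
  have ha2 : Complex.normSq a = 1 := by
    rw [← Complex.sq_norm, ha]; norm_num
  have ha0 : a ≠ 0 := by
    intro h; rw [h] at ha; simp at ha
  set w : ℂ := a * B1 + b - B1 with hw_def
  -- From the three B1 measurements, extract line equations
  have key1 : ∀ z : ℂ, ‖a * z + b - B1‖ = ‖z - B1‖ →
      ((a * (starRingEnd ℂ) w) * z).re
        = ((a * (starRingEnd ℂ) w) * B1).re - Complex.normSq w / 2 := by
    intro z hz
    have hsq : Complex.normSq (a * (z - B1) + w) = Complex.normSq (z - B1) := by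
      have e1 : a * z + b - B1 = a * (z - B1) + w := by rw [hw_def]; ring
      have h' : Complex.normSq (a * z + b - B1) = Complex.normSq (z - B1) := by
        rw [← Complex.sq_norm, ← Complex.sq_norm, hz]
      rwa [e1] at h' 
    rw [Complex.normSq_add, Complex.normSq_mul, ha2, one_mul] at hsq
    have hexp : (a * (z - B1) * (starRingEnd ℂ) w).re
        = ((a * (starRingEnd ℂ) w) * z).re - ((a * (starRingEnd ℂ) w) * B1).re := by
      have : a * (z - B1) * (starRingEnd ℂ) w
          = (a * (starRingEnd ℂ) w) * z - (a * (starRingEnd ℂ) w) * B1 := by ring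
      rw [this, Complex.sub_re]
    nlinarith [hsq, hexp]
  -- w = 0
  have hw0 : w = 0 := by
    by_contra hw
    have hu : a * (starRingEnd ℂ) w ≠ 0 :=
      mul_ne_zero ha0 (by simpa using hw)
    exact hnc1 (line_collinear_aux _ hu _ _ _ _ (key1 _ h0) (key1 _ h1) (key1 _ h2))
  have hb : b = B1 - a * B1 := by
    have := hw0
    rw [hw_def] at this
    linear_combination this
  -- Now the B2 measurements: Re(u' * z) = Re(u' * B1) for z = P3, P4 where u' = (a-1) * conj (B1 - B2)
  set u' : ℂ := (a - 1) * (starRingEnd ℂ) (B1 - B2) with hu'_def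
  have key2 : ∀ z : ℂ, ‖a * z + b - B2‖ = ‖z - B2‖ →
      (u' * z).re = (u' * B1).re := by
    intro z hz
    have e1 : a * z + b - B2 = a * (z - B1) + (B1 - B2) := by rw [hb]; ring
    have e2 : z - B2 = (z - B1) + (B1 - B2) := by ring
    have hsq : Complex.normSq (a * (z - B1) + (B1 - B2))
        = Complex.normSq ((z - B1) + (B1 - B2)) := by
      have h' : Complex.normSq (a * z + b - B2) = Complex.normSq (z - B2) := by
        rw [← Complex.sq_norm, ← Complex.sq_norm, hz]
      rwa [e1, e2] at h' 
    rw [Complex.normSq_add, Complex.normSq_add, Complex.normSq_mul, ha2, one_mul] at hsq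
    have hexp : (a * (z - B1) * (starRingEnd ℂ) (B1 - B2)).re
        - ((z - B1) * (starRingEnd ℂ) (B1 - B2)).re
        = (u' * z).re - (u' * B1).re := by
      have : a * (z - B1) * (starRingEnd ℂ) (B1 - B2)
          - (z - B1) * (starRingEnd ℂ) (B1 - B2) = u' * z - u' * B1 := by
        rw [hu'_def]; ring
      rw [← Complex.sub_re, ← Complex.sub_re, this]
    nlinarith [hsq, hexp]
  have ha1 : a = 1 := by
    by_contra haa
    have hd : (B1 - B2) ≠ 0 := sub_ne_zero.mpr hB
    have hu : u' ≠ 0 := mul_ne_zero (sub_ne_zero.mpr haa) ((map_ne_zero _).mpr hd)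
    exact hnc2 (line_collinear_aux _ hu ((u' * B1).re) _ _ _ rfl (key2 _ h3) (key2 _ h4))
  have hb0 : b = 0 := by rw [hb, ha1]; ring
  funext z
  simp [ha1, hb0]
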